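/- arXiv:1203.1115 — 2 statements merged into one kernel-verified Lean document; each statement's English description precedes it below -/
import Mathlib

section
/- Fix positive integers a,b,c. For any non-negative integers p, m and n, ζ*_p({c}^m,b,{a}^n) = Σ_{k=0}^m Σ_{l=0}^n (-1)^{k+l} · ζ_p({a}^l,b,{c}^k) · ζ*_p({c}^{m-k}) · ζ*_p({a}^{n-l}). -/
open scoped BigOperators

/-- Truncated multiple zeta value: sum over strictly decreasing tuples bounded by p. -/
noncomputable def zetaT (p : ℕ) (ks : List ℕ) : ℝ :=
  ∑ f ∈ (Fintype.piFinset fun _ : Fin ks.length => Finset.Icc 1 p) |>.filter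
      (fun f => ∀ i j : Fin ks.length, i < j → f j < f i),
    ∏ i, ((f i : ℝ) ^ ks.get i)⁻¹

/-- Truncated multiple zeta-star value: sum over weakly decreasing tuples bounded by p. -/
noncomputable def zetaStarT (p : ℕ) (ks : List ℕ) : ℝ :=
  ∑ f ∈ (Fintype.piFinset fun _ : Fin ks.length => Finset.Icc 1 p) |>.filter
      (fun f => ∀ i j : Fin ks.length, i ≤ j → f j ≤ f i),
    ∏ i, ((f i : ℝ) ^ ks.get i)⁻¹

section AuxStmt9
open Finset

/-- Sum over weakly decreasing `r`-tuples with values in `[s,t]` of products of weights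
(defined by peeling the smallest entry). -/
noncomputable def myW (w : ℕ → ℝ) : ℕ → ℕ → ℕ → ℝ
  | 0, _, _ => 1
  | r + 1, s, t => ∑ x ∈ Finset.Icc s t, w x * myW w r x t

/-- Sum over strictly decreasing `r`-tuples with values in `[s,t]` of products of weights
(defined by peeling the smallest entry). -/
noncomputable def myD (w : ℕ → ℝ) : ℕ → ℕ → ℕ → ℝ
  | 0, _, _ => 1
  | r + 1, s, t => ∑ x ∈ Finset.Icc s t, w x * myD w r (x + 1) t

@[simp] lemma myW_zero (w : ℕ → ℝ) (s t : ℕ) : myW w 0 s t = 1 := rfl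
@[simp] lemma myD_zero (w : ℕ → ℝ) (s t : ℕ) : myD w 0 s t = 1 := rfl

lemma myW_succ (w : ℕ → ℝ) (r s t : ℕ) :
    myW w (r + 1) s t = ∑ x ∈ Finset.Icc s t, w x * myW w r x t := rfl
lemma myD_succ (w : ℕ → ℝ) (r s t : ℕ) :
    myD w (r + 1) s t = ∑ x ∈ Finset.Icc s t, w x * myD w r (x + 1) t := rfl

lemma myW_of_lt (w : ℕ → ℝ) (r s t : ℕ) (h : t < s) : myW w (r + 1) s t = 0 := by
  rw [myW_succ, Finset.Icc_eq_empty (by omega)]; simp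

lemma myD_of_lt (w : ℕ → ℝ) (r s t : ℕ) (h : t < s) : myD w (r + 1) s t = 0 := by
  rw [myD_succ, Finset.Icc_eq_empty (by omega)]; simp

/-- Dual recursion for `myW`: peeling the largest entry. -/
lemma myW_succ' (w : ℕ → ℝ) : ∀ (r s t : ℕ),
    myW w (r + 1) s t = ∑ x ∈ Finset.Icc s t, w x * myW w r s x := by
  intro r
  induction r with
  | zero => simp [myW_succ]
  | succ r ih =>
      intro s t
      rw [myW_succ]
      have h1 : ∀ y ∈ Finset.Icc s t, w y * myW w (r+1) y t
          = ∑ x ∈ Finset.Icc y t, w y * (w x * myW w r y x) := by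
        intro y hy
        rw [ih y t, Finset.mul_sum]
      rw [Finset.sum_congr rfl h1]
      rw [Finset.sum_comm' (t' := Finset.Icc s t) (s' := fun x => Finset.Icc s x)
        (by intro y x; simp only [Finset.mem_Icc]; omega)]
      apply Finset.sum_congr rfl
      intro x hx
      rw [myW_succ, Finset.mul_sum]
      apply Finset.sum_congr rfl
      intro y hy
      ring

/-- Dual recursion for `myD`: peeling the largest entry. -/
lemma myD_succ' (w : ℕ → ℝ) : ∀ (r s t : ℕ), 1 ≤ s →
    myD w (r + 1) s t = ∑ x ∈ Finset.Icc s t, w x * myD w r s (x - 1) := by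
  intro r
  induction r with
  | zero => simp [myD_succ]
  | succ r ih =>
      intro s t hs
      rw [myD_succ]
      have h1 : ∀ y ∈ Finset.Icc s t, w y * myD w (r+1) (y+1) t
          = ∑ x ∈ Finset.Icc (y+1) t, w y * (w x * myD w r (y+1) (x-1)) := by
        intro y hy
        rw [ih (y+1) t (by omega), Finset.mul_sum]
      rw [Finset.sum_congr rfl h1]
      rw [Finset.sum_comm' (t' := Finset.Icc s t) (s' := fun x => Finset.Icc s (x-1))
        (by intro y x; simp only [Finset.mem_Icc]; omega)]
      apply Finset.sum_congr rfl
      intro x hx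
      rw [myD_succ, Finset.mul_sum]
      apply Finset.sum_congr rfl
      intro y hy
      have : y + 1 ≤ x - 1 + 1 := by simp at hy ⊢; omega
      ring

lemma Icc_split_bot (s t : ℕ) (h : s ≤ t) :
    Finset.Icc s t = insert s (Finset.Icc (s+1) t) := by
  ext x; simp only [Finset.mem_Icc, Finset.mem_insert]; omega

lemma Icc_split_top (s t : ℕ) (h : s ≤ t + 1) :
    Finset.Icc s (t+1) = insert (t+1) (Finset.Icc s t) := by
  ext x; simp only [Finset.mem_Icc, Finset.mem_insert]; omega

lemma myW_bot (w : ℕ → ℝ) (r s t : ℕ) (h : s ≤ t) :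
    myW w (r+1) s t = w s * myW w r s t + myW w (r+1) (s+1) t := by
  rw [myW_succ, Icc_split_bot s t h, Finset.sum_insert (by simp), myW_succ]

lemma myW_top (w : ℕ → ℝ) (r s t : ℕ) (h : s ≤ t + 1) :
    myW w (r+1) s (t+1) = myW w (r+1) s t + w (t+1) * myW w r s (t+1) := by
  rw [myW_succ', Icc_split_top s t h, Finset.sum_insert (by simp), myW_succ', add_comm]

lemma myD_bot (w : ℕ → ℝ) (r s t : ℕ) (h : s ≤ t) :
    myD w (r+1) s t = w s * myD w r (s+1) t + myD w (r+1) (s+1) t := by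
  rw [myD_succ, Icc_split_bot s t h, Finset.sum_insert (by simp), myD_succ]

lemma myD_top (w : ℕ → ℝ) (r s t : ℕ) (hs : 1 ≤ s) (h : s ≤ t + 1) :
    myD w (r+1) s (t+1) = myD w (r+1) s t + w (t+1) * myD w r s t := by
  rw [myD_succ' w r s (t+1) hs, Icc_split_top s t h, Finset.sum_insert (by simp),
    myD_succ' w r s t hs, add_comm]
  simp

lemma convA (w : ℕ → ℝ) (d : ℕ) : ∀ q n p : ℕ, p = q + d →
    (∑ l ∈ Finset.range (n+1), (-1:ℝ)^l * myD w l (q+1) p * myW w (n-l) 1 p)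
      = myW w n 1 q := by
  induction d with
  | zero =>
      intro q n p hp
      have hq : p = q := by omega
      subst hq
      rw [Finset.sum_range_succ']
      have h1 : ∀ l ∈ Finset.range n,
          (-1:ℝ)^(l+1) * myD w (l+1) (p+1) p * myW w (n-(l+1)) 1 p = 0 := by
        intro l _
        rw [myD_of_lt w l (p+1) p (by omega)]
        ring
      rw [Finset.sum_congr rfl h1]
      simp
  | succ d ih =>
      intro q n p hp
      match n with
      | 0 => simp
      | Nat.succ n' =>
          have ha := Finset.sum_range_succ'
            (fun l => (-1:ℝ)^l * myD w l (q+1) p * myW w (n'+1-l) 1 p) (n'+1)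
          have hf := Finset.sum_range_succ'
            (fun l => (-1:ℝ)^l * myD w l (q+2) p * myW w (n'+1-l) 1 p) (n'+1)
          have hb : (∑ l ∈ Finset.range (n'+1),
              (-1:ℝ)^(l+1) * myD w (l+1) (q+1) p * myW w (n'+1-(l+1)) 1 p)
              = (∑ l ∈ Finset.range (n'+1),
                  (-(w (q+1)) * ((-1:ℝ)^l * myD w l (q+2) p * myW w (n'-l) 1 p)
                  + (-1:ℝ)^(l+1) * myD w (l+1) (q+2) p * myW w (n'+1-(l+1)) 1 p)) := by
            apply Finset.sum_congr rfl
            intro l _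
            rw [myD_bot w l (q+1) p (by omega)]
            have h2 : n'+1-(l+1) = n'-l := by omega
            rw [h2]
            ring
          rw [Finset.sum_add_distrib, ← Finset.mul_sum] at hb
          have he : (∑ l ∈ Finset.range (n'+1),
              (-1:ℝ)^l * myD w l (q+2) p * myW w (n'-l) 1 p) = myW w n' 1 (q+1) :=
            ih (q+1) n' p (by omega)
          have hg : (∑ l ∈ Finset.range (n'+1+1),
              (-1:ℝ)^l * myD w l (q+2) p * myW w (n'+1-l) 1 p) = myW w (n'+1) 1 (q+1) :=
            ih (q+1) (n'+1) p (by omega)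
          have hi := myW_top w n' 1 q (by omega)
          simp only [Nat.sub_zero, pow_zero, myD_zero, one_mul, Nat.add_sub_cancel] at ha hf
          simp only [Nat.succ_eq_add_one]
          rw [ha, hb, he]
          linarith [hf, hg, hi]

lemma convB (w : ℕ → ℝ) (p : ℕ) : ∀ e m : ℕ, e + 1 ≤ p →
    (∑ k ∈ Finset.range (m+1), (-1:ℝ)^k * myD w k 1 e * myW w (m-k) 1 p)
      = myW w m (e+1) p := by
  intro e
  induction e with
  | zero =>
      intro m _
      rw [Finset.sum_range_succ']
      have h1 : ∀ k ∈ Finset.range m,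
          (-1:ℝ)^(k+1) * myD w (k+1) 1 0 * myW w (m-(k+1)) 1 p = 0 := by
        intro k _
        rw [myD_of_lt w k 1 0 (by omega)]
        ring
      rw [Finset.sum_congr rfl h1]
      simp
  | succ e ih =>
      intro m he
      match m with
      | 0 => simp
      | Nat.succ m' =>
          have ha := Finset.sum_range_succ'
            (fun k => (-1:ℝ)^k * myD w k 1 (e+1) * myW w (m'+1-k) 1 p) (m'+1)
          have hf := Finset.sum_range_succ'
            (fun k => (-1:ℝ)^k * myD w k 1 e * myW w (m'+1-k) 1 p) (m'+1)
          have hb : (∑ k ∈ Finset.range (m'+1),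
              (-1:ℝ)^(k+1) * myD w (k+1) 1 (e+1) * myW w (m'+1-(k+1)) 1 p)
              = (∑ k ∈ Finset.range (m'+1),
                  ((-1:ℝ)^(k+1) * myD w (k+1) 1 e * myW w (m'+1-(k+1)) 1 p
                  + -(w (e+1)) * ((-1:ℝ)^k * myD w k 1 e * myW w (m'-k) 1 p))) := by
            apply Finset.sum_congr rfl
            intro k _
            rw [myD_top w k 1 e (by omega) (by omega)]
            have h2 : m'+1-(k+1) = m'-k := by omega
            rw [h2]
            ring
          rw [Finset.sum_add_distrib, ← Finset.mul_sum] at hb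
          have heq : (∑ k ∈ Finset.range (m'+1),
              (-1:ℝ)^k * myD w k 1 e * myW w (m'-k) 1 p) = myW w m' (e+1) p :=
            ih m' (by omega)
          have hg : (∑ k ∈ Finset.range (m'+1+1),
              (-1:ℝ)^k * myD w k 1 e * myW w (m'+1-k) 1 p) = myW w (m'+1) (e+1) p :=
            ih (m'+1) (by omega)
          have hi := myW_bot w m' (e+1) p (by omega)
          simp only [Nat.sub_zero, pow_zero, myD_zero, one_mul, Nat.add_sub_cancel] at ha hf
          simp only [Nat.succ_eq_add_one]
          rw [ha, hb, heq]
          linarith [hf, hg, hi]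
lemma star_rec (p n : ℕ) (K : Fin (n+1) → ℕ) :
    (∑ f ∈ (Fintype.piFinset fun _ : Fin (n+1) => Finset.Icc 1 p).filter
        (fun f => ∀ i j : Fin (n+1), i ≤ j → f j ≤ f i), ∏ i, ((f i : ℝ) ^ K i)⁻¹)
      = ∑ q ∈ Finset.Icc 1 p, ((q:ℝ) ^ K 0)⁻¹ *
          ∑ g ∈ (Fintype.piFinset fun _ : Fin n => Finset.Icc 1 q).filter
            (fun g => ∀ i j : Fin n, i ≤ j → g j ≤ g i), ∏ i, ((g i : ℝ) ^ K i.succ)⁻¹ := by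
  have hrw : ∀ q ∈ Finset.Icc 1 p, ((q:ℝ) ^ K 0)⁻¹ *
      (∑ g ∈ (Fintype.piFinset fun _ : Fin n => Finset.Icc 1 q).filter
        (fun g => ∀ i j : Fin n, i ≤ j → g j ≤ g i), ∏ i, ((g i : ℝ) ^ K i.succ)⁻¹)
      = ∑ g ∈ (Fintype.piFinset fun _ : Fin n => Finset.Icc 1 q).filter
          (fun g => ∀ i j : Fin n, i ≤ j → g j ≤ g i),
          ((q:ℝ) ^ K 0)⁻¹ * ∏ i, ((g i : ℝ) ^ K i.succ)⁻¹ :=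
    fun q _ => Finset.mul_sum _ _ _
  rw [Finset.sum_congr rfl hrw,
    Finset.sum_sigma' (Finset.Icc 1 p)
      (fun q => (Fintype.piFinset fun _ : Fin n => Finset.Icc 1 q).filter
        (fun g => ∀ i j : Fin n, i ≤ j → g j ≤ g i))
      (fun q g => ((q:ℝ) ^ K 0)⁻¹ * ∏ i, ((g i : ℝ) ^ K i.succ)⁻¹)]
  refine Finset.sum_nbij' (fun f => ⟨f 0, Fin.tail f⟩)
    (fun x => Fin.cons x.1 x.2) ?_ ?_ ?_ ?_ ?_
  · intro f hf
    simp only [Finset.mem_filter, Fintype.mem_piFinset, Finset.mem_Icc] at hf ⊢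
    obtain ⟨hmem, hdec⟩ := hf
    refine Finset.mem_sigma.2 ⟨?_, ?_⟩
    · simp only [Finset.mem_Icc]; exact hmem 0
    · simp only [Finset.mem_filter, Fintype.mem_piFinset, Finset.mem_Icc, Fin.tail]
      constructor
      · intro i
        exact ⟨(hmem i.succ).1, hdec 0 i.succ (Fin.zero_le _)⟩
      · intro i j hij
        exact hdec i.succ j.succ (Fin.succ_le_succ_iff.2 hij)
  · intro x hx
    obtain ⟨q, g⟩ := x
    simp only [Finset.mem_sigma, Finset.mem_Icc, Finset.mem_filter,
      Fintype.mem_piFinset] at hx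
    obtain ⟨⟨hq1, hqp⟩, hg, hdec⟩ := hx
    simp only [Finset.mem_filter, Fintype.mem_piFinset, Finset.mem_Icc]
    constructor
    · intro i
      refine Fin.cases ?_ ?_ i
      · simpa using ⟨hq1, hqp⟩
      · intro j
        simp only [Fin.cons_succ]
        have := hg j
        exact ⟨this.1, this.2.trans hqp⟩
    · intro i j hij
      rcases Fin.eq_zero_or_eq_succ i with rfl | ⟨i', rfl⟩ <;>
        rcases Fin.eq_zero_or_eq_succ j with rfl | ⟨j', rfl⟩
      · exact le_refl _
      · simp only [Fin.cons_zero, Fin.cons_succ]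
        have := hg j'
        exact this.2
      · exact absurd hij (by simp [Fin.le_def])
      · simp only [Fin.cons_succ]
        exact hdec i' j' (Fin.succ_le_succ_iff.1 hij)
  · intro f _
    exact Fin.cons_self_tail f
  · intro x _
    obtain ⟨q, g⟩ := x
    simp [Fin.tail_cons]
  · intro f hf
    exact Fin.prod_univ_succ _
lemma zeta_rec (p n : ℕ) (K : Fin (n+1) → ℕ) :
    (∑ f ∈ (Fintype.piFinset fun _ : Fin (n+1) => Finset.Icc 1 p).filter
        (fun f => ∀ i j : Fin (n+1), i < j → f j < f i), ∏ i, ((f i : ℝ) ^ K i)⁻¹)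
      = ∑ q ∈ Finset.Icc 1 p, ((q:ℝ) ^ K 0)⁻¹ *
          ∑ g ∈ (Fintype.piFinset fun _ : Fin n => Finset.Icc 1 (q-1)).filter
            (fun g => ∀ i j : Fin n, i < j → g j < g i), ∏ i, ((g i : ℝ) ^ K i.succ)⁻¹ := by
  have hrw : ∀ q ∈ Finset.Icc 1 p, ((q:ℝ) ^ K 0)⁻¹ *
      (∑ g ∈ (Fintype.piFinset fun _ : Fin n => Finset.Icc 1 (q-1)).filter
        (fun g => ∀ i j : Fin n, i < j → g j < g i), ∏ i, ((g i : ℝ) ^ K i.succ)⁻¹)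
      = ∑ g ∈ (Fintype.piFinset fun _ : Fin n => Finset.Icc 1 (q-1)).filter
          (fun g => ∀ i j : Fin n, i < j → g j < g i),
          ((q:ℝ) ^ K 0)⁻¹ * ∏ i, ((g i : ℝ) ^ K i.succ)⁻¹ :=
    fun q _ => Finset.mul_sum _ _ _
  rw [Finset.sum_congr rfl hrw,
    Finset.sum_sigma' (Finset.Icc 1 p)
      (fun q => (Fintype.piFinset fun _ : Fin n => Finset.Icc 1 (q-1)).filter
        (fun g => ∀ i j : Fin n, i < j → g j < g i))
      (fun q g => ((q:ℝ) ^ K 0)⁻¹ * ∏ i, ((g i : ℝ) ^ K i.succ)⁻¹)]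
  refine Finset.sum_nbij' (fun f => ⟨f 0, Fin.tail f⟩)
    (fun x => Fin.cons x.1 x.2) ?_ ?_ ?_ ?_ ?_
  · intro f hf
    simp only [Finset.mem_filter, Fintype.mem_piFinset, Finset.mem_Icc] at hf
    obtain ⟨hmem, hdec⟩ := hf
    refine Finset.mem_sigma.2 ⟨?_, ?_⟩
    · simp only [Finset.mem_Icc]; exact hmem 0
    · simp only [Finset.mem_filter, Fintype.mem_piFinset, Finset.mem_Icc, Fin.tail]
      constructor
      · intro i
        have h1 := (hmem i.succ).1
        have h2 := hdec 0 i.succ (Fin.succ_pos _)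
        exact ⟨h1, by omega⟩
      · intro i j hij
        exact hdec i.succ j.succ (Fin.succ_lt_succ_iff.2 hij)
  · intro x hx
    obtain ⟨q, g⟩ := x
    simp only [Finset.mem_sigma, Finset.mem_Icc, Finset.mem_filter,
      Fintype.mem_piFinset] at hx
    obtain ⟨⟨hq1, hqp⟩, hg, hdec⟩ := hx
    simp only [Finset.mem_filter, Fintype.mem_piFinset, Finset.mem_Icc]
    constructor
    · intro i
      refine Fin.cases ?_ ?_ i
      · simpa using ⟨hq1, hqp⟩
      · intro j
        simp only [Fin.cons_succ]
        have := hg j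
        exact ⟨this.1, by omega⟩
    · intro i j hij
      rcases Fin.eq_zero_or_eq_succ i with rfl | ⟨i', rfl⟩ <;>
        rcases Fin.eq_zero_or_eq_succ j with rfl | ⟨j', rfl⟩
      · exact absurd hij (lt_irrefl _)
      · simp only [Fin.cons_zero, Fin.cons_succ]
        have := hg j'
        omega
      · exact absurd hij (by simp [Fin.lt_def])
      · simp only [Fin.cons_succ]
        exact hdec i' j' (Fin.succ_lt_succ_iff.1 hij)
  · intro f _
    exact Fin.cons_self_tail f
  · intro x _
    obtain ⟨q, g⟩ := x
    simp [Fin.tail_cons]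
  · intro f hf
    exact Fin.prod_univ_succ _
lemma zetaStarT_nil (p : ℕ) : zetaStarT p [] = 1 := by
  simp [zetaStarT]

lemma zetaT_nil (p : ℕ) : zetaT p [] = 1 := by
  simp [zetaT]

lemma zetaStarT_cons (p k : ℕ) (ks : List ℕ) :
    zetaStarT p (k :: ks) = ∑ q ∈ Finset.Icc 1 p, ((q:ℝ)^k)⁻¹ * zetaStarT q ks :=
  star_rec p ks.length (fun i => (k :: ks).get i)

lemma zetaT_cons (p k : ℕ) (ks : List ℕ) :
    zetaT p (k :: ks) = ∑ q ∈ Finset.Icc 1 p, ((q:ℝ)^k)⁻¹ * zetaT (q-1) ks :=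
  zeta_rec p ks.length (fun i => (k :: ks).get i)

lemma zetaStarT_rep (a : ℕ) : ∀ n p : ℕ,
    zetaStarT p (List.replicate n a) = myW (fun x => ((x:ℝ)^a)⁻¹) n 1 p := by
  intro n
  induction n with
  | zero => intro p; simpa using zetaStarT_nil p
  | succ n ih =>
      intro p
      rw [List.replicate_succ, zetaStarT_cons, myW_succ']
      exact Finset.sum_congr rfl fun q _ => by rw [ih q]

lemma zetaT_rep (c : ℕ) : ∀ k t : ℕ,
    zetaT t (List.replicate k c) = myD (fun x => ((x:ℝ)^c)⁻¹) k 1 t := by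
  intro k
  induction k with
  | zero => intro t; simpa using zetaT_nil t
  | succ k ih =>
      intro t
      rw [List.replicate_succ, zetaT_cons, myD_succ' _ k 1 t (le_refl 1)]
      exact Finset.sum_congr rfl fun q _ => by rw [ih (q-1)]
lemma star_main (b c aa n : ℕ) : ∀ m p : ℕ,
    zetaStarT p (List.replicate m c ++ [b] ++ List.replicate n aa)
      = ∑ q ∈ Finset.Icc 1 p, ((q:ℝ)^b)⁻¹ * myW (fun x => ((x:ℝ)^c)⁻¹) m q p
          * myW (fun x => ((x:ℝ)^aa)⁻¹) n 1 q := by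
  intro m
  induction m with
  | zero =>
      intro p
      show zetaStarT p (b :: List.replicate n aa) = _
      rw [zetaStarT_cons]
      refine Finset.sum_congr rfl fun q _ => ?_
      rw [zetaStarT_rep]
      simp [mul_assoc]
  | succ m ih =>
      intro p
      show zetaStarT p (c :: (List.replicate m c ++ [b] ++ List.replicate n aa)) = _
      rw [zetaStarT_cons]
      have h1 : ∀ x ∈ Finset.Icc 1 p, ((x:ℝ)^c)⁻¹ *
          zetaStarT x (List.replicate m c ++ [b] ++ List.replicate n aa)
          = ∑ q ∈ Finset.Icc 1 x, ((x:ℝ)^c)⁻¹ * (((q:ℝ)^b)⁻¹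
              * myW (fun y => ((y:ℝ)^c)⁻¹) m q x * myW (fun y => ((y:ℝ)^aa)⁻¹) n 1 q) := by
        intro x _
        rw [ih x, Finset.mul_sum]
      rw [Finset.sum_congr rfl h1]
      rw [Finset.sum_comm' (t' := Finset.Icc 1 p) (s' := fun q => Finset.Icc q p)
        (by intro x q; simp only [Finset.mem_Icc]; omega)]
      refine Finset.sum_congr rfl fun q _ => ?_
      rw [myW_succ' _ m q p, Finset.mul_sum, Finset.sum_mul]
      refine Finset.sum_congr rfl fun x _ => ?_
      ring

lemma zeta_main (b aa c k : ℕ) : ∀ l t : ℕ,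
    zetaT t (List.replicate l aa ++ [b] ++ List.replicate k c)
      = ∑ q ∈ Finset.Icc 1 t, ((q:ℝ)^b)⁻¹ * myD (fun x => ((x:ℝ)^aa)⁻¹) l (q+1) t
          * myD (fun x => ((x:ℝ)^c)⁻¹) k 1 (q-1) := by
  intro l
  induction l with
  | zero =>
      intro t
      show zetaT t (b :: List.replicate k c) = _
      rw [zetaT_cons]
      refine Finset.sum_congr rfl fun q _ => ?_
      rw [zetaT_rep]
      simp [mul_assoc, mul_comm]
  | succ l ih =>
      intro t
      show zetaT t (aa :: (List.replicate l aa ++ [b] ++ List.replicate k c)) = _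
      rw [zetaT_cons]
      have h1 : ∀ x ∈ Finset.Icc 1 t, ((x:ℝ)^aa)⁻¹ *
          zetaT (x-1) (List.replicate l aa ++ [b] ++ List.replicate k c)
          = ∑ q ∈ Finset.Icc 1 (x-1), ((x:ℝ)^aa)⁻¹ * (((q:ℝ)^b)⁻¹
              * myD (fun y => ((y:ℝ)^aa)⁻¹) l (q+1) (x-1)
              * myD (fun y => ((y:ℝ)^c)⁻¹) k 1 (q-1)) := by
        intro x _
        rw [ih (x-1), Finset.mul_sum]
      rw [Finset.sum_congr rfl h1]
      rw [Finset.sum_comm' (t' := Finset.Icc 1 t) (s' := fun q => Finset.Icc (q+1) t)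
        (by intro x q; simp only [Finset.mem_Icc]; omega)]
      refine Finset.sum_congr rfl fun q _ => ?_
      rw [myD_succ' _ l (q+1) t (by omega), Finset.mul_sum, Finset.sum_mul]
      refine Finset.sum_congr rfl fun x _ => ?_
      ring

end AuxStmt9

theorem stmt_9 (a b c : ℕ) (ha : 0 < a) (hb : 0 < b) (hc : 0 < c) (p m n : ℕ) :
    zetaStarT p (List.replicate m c ++ [b] ++ List.replicate n a) =
      ∑ k ∈ Finset.range (m + 1), ∑ l ∈ Finset.range (n + 1),
        (-1 : ℝ) ^ (k + l) *
          zetaT p (List.replicate l a ++ [b] ++ List.replicate k c) *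
          zetaStarT p (List.replicate (m - k) c) *
          zetaStarT p (List.replicate (n - l) a) := by
  rw [star_main b c a n m p]
  have hR : ∀ k ∈ Finset.range (m+1), ∀ l ∈ Finset.range (n+1),
      (-1:ℝ)^(k+l) * zetaT p (List.replicate l a ++ [b] ++ List.replicate k c)
        * zetaStarT p (List.replicate (m-k) c) * zetaStarT p (List.replicate (n-l) a)
      = ∑ q ∈ Finset.Icc 1 p,
          ((-1:ℝ)^k * myD (fun x => ((x:ℝ)^c)⁻¹) k 1 (q-1)
              * myW (fun x => ((x:ℝ)^c)⁻¹) (m-k) 1 p)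
            * (((-1:ℝ)^l * myD (fun x => ((x:ℝ)^a)⁻¹) l (q+1) p
              * myW (fun x => ((x:ℝ)^a)⁻¹) (n-l) 1 p))
            * ((q:ℝ)^b)⁻¹ := by
    intro k _ l _
    rw [zeta_main b a c k l p, zetaStarT_rep c (m-k) p, zetaStarT_rep a (n-l) p,
      Finset.mul_sum, Finset.sum_mul, Finset.sum_mul]
    refine Finset.sum_congr rfl fun q _ => ?_
    ring
  rw [Finset.sum_congr rfl (fun k hk => Finset.sum_congr rfl (hR k hk))]
  have swap1 : ∀ k ∈ Finset.range (m+1),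
      (∑ l ∈ Finset.range (n+1), ∑ q ∈ Finset.Icc 1 p,
          ((-1:ℝ)^k * myD (fun x => ((x:ℝ)^c)⁻¹) k 1 (q-1)
              * myW (fun x => ((x:ℝ)^c)⁻¹) (m-k) 1 p)
            * (((-1:ℝ)^l * myD (fun x => ((x:ℝ)^a)⁻¹) l (q+1) p
              * myW (fun x => ((x:ℝ)^a)⁻¹) (n-l) 1 p))
            * ((q:ℝ)^b)⁻¹)
      = ∑ q ∈ Finset.Icc 1 p, ∑ l ∈ Finset.range (n+1),
          ((-1:ℝ)^k * myD (fun x => ((x:ℝ)^c)⁻¹) k 1 (q-1)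
              * myW (fun x => ((x:ℝ)^c)⁻¹) (m-k) 1 p)
            * (((-1:ℝ)^l * myD (fun x => ((x:ℝ)^a)⁻¹) l (q+1) p
              * myW (fun x => ((x:ℝ)^a)⁻¹) (n-l) 1 p))
            * ((q:ℝ)^b)⁻¹ := fun k _ => Finset.sum_comm
  rw [Finset.sum_congr rfl swap1, Finset.sum_comm]
  refine Finset.sum_congr rfl fun q hq => ?_
  simp only [Finset.mem_Icc] at hq
  have hA := convA (fun x => ((x:ℝ)^a)⁻¹) (p-q) q n p (by omega)
  have hB := convB (fun x => ((x:ℝ)^c)⁻¹) p (q-1) m (by omega)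
  rw [show q-1+1 = q from by omega] at hB
  rw [← hA, ← hB, Finset.mul_sum]
  rw [Finset.sum_comm]
  refine Finset.sum_congr rfl fun l _ => ?_
  rw [Finset.mul_sum, Finset.sum_mul]
  refine Finset.sum_congr rfl fun k _ => ?_
  ring
end

section
/- For every integer m ≥ 1, ζ*({2}^m,1) = 2·ζ(2m+1). -/
open scoped BigOperators
open scoped NNReal ENNReal

section ZetaStarAux
open Nat Finset

noncomputable def Wf (n k : ℕ) : ℝ≥0 := 2 * (n ! : ℝ≥0)^2 / ((n - k)! * (n + k)!)

lemma Wf_coe (n k : ℕ) : ((Wf n k : ℝ≥0) : ℝ) = 2 * (n ! : ℝ)^2 / ((n - k)! * (n + k)!) := by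
  simp [Wf]

lemma Wf_key {k M : ℕ} (hk : 1 ≤ k) (hkM : k ≤ M) :
    Wf M k * ((k:ℝ≥0)^2)⁻¹ + Wf (M+1) k * (((M+1:ℕ):ℝ≥0)^2)⁻¹ = Wf (M+1) k * ((k:ℝ≥0)^2)⁻¹ := by
  obtain ⟨d, rfl⟩ : ∃ d, M = k + d := ⟨M - k, by omega⟩
  apply NNReal.coe_injective
  push_cast [Wf_coe]
  have h1 : k + d - k = d := by omega
  have h2 : k + d + 1 - k = d + 1 := by omega
  rw [h1, h2]
  have e1 : (k + d + 1)! = (k + d + 1) * (k + d)! := rfl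
  have e2 : (d + 1)! = (d + 1) * d ! := rfl
  have e3 : (k + d + 1 + k)! = (k + d + 1 + k) * (k + d + k)! := by
    rw [show k+d+1+k = (k+d+k)+1 by omega, Nat.factorial_succ]
  rw [e1, e2, e3]
  push_cast
  have hk0 : (k:ℝ) ≠ 0 := by positivity
  have h4 : ((k + d)! : ℝ) ≠ 0 := by positivity
  have h5 : (d ! : ℝ) ≠ 0 := by positivity
  have h6 : ((k + d + k)! : ℝ) ≠ 0 := by positivity
  field_simp
  ring

lemma Wf_keyA {k M : ℕ} (hk : 1 ≤ k) (hkM : k ≤ M) :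
    Wf (M+1) k * (k:ℝ≥0)⁻¹ =
      Wf M k * (k:ℝ≥0)⁻¹ + Wf (M+1) k * (k:ℝ≥0) * (((M+1:ℕ):ℝ≥0)^2)⁻¹ := by
  obtain ⟨d, rfl⟩ : ∃ d, M = k + d := ⟨M - k, by omega⟩
  apply NNReal.coe_injective
  push_cast [Wf_coe]
  have h1 : k + d - k = d := by omega
  have h2 : k + d + 1 - k = d + 1 := by omega
  rw [h1, h2]
  have e1 : (k + d + 1)! = (k + d + 1) * (k + d)! := rfl
  have e2 : (d + 1)! = (d + 1) * d ! := rfl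
  have e3 : (k + d + 1 + k)! = (k + d + 1 + k) * (k + d + k)! := by
    rw [show k+d+1+k = (k+d+k)+1 by omega, Nat.factorial_succ]
  rw [e1, e2, e3]
  push_cast
  have hk0 : (k:ℝ) ≠ 0 := by positivity
  have h4 : ((k + d)! : ℝ) ≠ 0 := by positivity
  have h5 : (d ! : ℝ) ≠ 0 := by positivity
  have h6 : ((k + d + k)! : ℝ) ≠ 0 := by positivity
  field_simp
  ring

noncomputable def phi (N k : ℕ) : ℝ≥0 :=
  if k ≤ N then ((N ! : ℝ≥0)^2) / ((N - k)! * (N + k - 1)!) else 0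

lemma phi_step {N k : ℕ} (hk : 1 ≤ k) (hkN : k ≤ N) :
    phi N k = (k:ℝ≥0) * Wf N k + phi N (k+1) := by
  rcases Nat.lt_or_ge k N with h | h
  · obtain ⟨e, rfl⟩ : ∃ e, N = k + (e+1) := ⟨N - k - 1, by omega⟩
    rw [phi, phi, if_pos hkN, if_pos (by omega)]
    apply NNReal.coe_injective
    push_cast [Wf_coe]
    have h1 : k + (e+1) - k = e + 1 := by omega
    have h2 : k + (e+1) - (k+1) = e := by omega
    have h3 : k + (e+1) + k - 1 = 2*k + e := by omega
    have h4 : k + (e+1) + (k+1) - 1 = 2*k + e + 1 := by omega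
    have h5 : k + (e+1) + k = 2*k + e + 1 := by omega
    rw [h1, h2, h3, h4, h5]
    have e1 : (e + 1)! = (e + 1) * e ! := rfl
    have e2 : (2*k + e + 1)! = (2*k + e + 1) * (2*k + e)! := rfl
    rw [e1, e2]
    push_cast
    have hk0 : (k:ℝ) ≠ 0 := by positivity
    have h6 : (e ! : ℝ) ≠ 0 := by positivity
    have h7 : ((2*k+e)! : ℝ) ≠ 0 := by positivity
    field_simp
    ring
  · have hkN' : k = N := by omega
    subst hkN'
    rw [phi, phi, if_pos le_rfl, if_neg (by omega)]
    obtain ⟨t, rfl⟩ : ∃ t, k = t + 1 := ⟨k - 1, by omega⟩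
    apply NNReal.coe_injective
    push_cast [Wf_coe]
    have h1 : t - t = 0 := by omega
    have h2 : t + 1 + (t+1) - 1 = 2*t + 1 := by omega
    have h3 : t + 1 + (t + 1) = 2*t + 2 := by omega
    rw [h1, h2, h3]
    have e2 : (2*t + 2)! = (2*t + 2) * (2*t + 1)! := rfl
    rw [e2, Nat.factorial_zero]
    push_cast
    have h6 : ((t+1):ℝ) ≠ 0 := by positivity
    have h7 : ((2*t+1)! : ℝ) ≠ 0 := by positivity
    have h8 : ((t+1)! : ℝ) ≠ 0 := by positivity
    field_simp
    ring

lemma lemA' {N : ℕ} (hN : 1 ≤ N) :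
    ∑ k ∈ Finset.Icc 1 N, (k:ℝ≥0) * Wf N k = N := by
  have key : ∀ t, ∀ a, a = N + 1 - t → 1 ≤ a →
      ∑ k ∈ Finset.Icc a N, (k:ℝ≥0) * Wf N k = phi N a := by
    intro t
    induction t with
    | zero =>
      intro a ha _
      rw [Finset.Icc_eq_empty (by omega)]
      simp [phi, if_neg (show ¬ a ≤ N by omega)]
    | succ t ih =>
      intro a ha h1a
      rcases Nat.lt_or_ge N a with h | h
      · rw [Finset.Icc_eq_empty (by omega)]
        simp [phi, if_neg (show ¬ a ≤ N by omega)]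
      · have hins : Finset.Icc a N = insert a (Finset.Icc (a+1) N) := by
          ext x; simp; omega
        rw [hins, Finset.sum_insert (by simp)]
        rw [ih (a+1) (by omega) (by omega)]
        rw [phi_step h1a h]
  have h1 := key N 1 (by omega) le_rfl
  rw [h1, phi, if_pos hN]
  obtain ⟨e, rfl⟩ : ∃ e, N = e + 1 := ⟨N - 1, by omega⟩
  apply NNReal.coe_injective
  push_cast
  have e1 : (e + 1)! = (e + 1) * e ! := rfl
  rw [e1]
  push_cast
  have h6 : (e ! : ℝ) ≠ 0 := by positivity
  have h8 : ((e+1) * (e ! : ℝ)) ≠ 0 := by positivity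
  field_simp

lemma lemA : ∀ N : ℕ, ∑ k ∈ Finset.Icc 1 N, Wf N k * (k:ℝ≥0)⁻¹ = ∑ k ∈ Finset.Icc 1 N, (k:ℝ≥0)⁻¹ := by
  intro N
  induction N with
  | zero => simp
  | succ N ih =>
    rw [Finset.sum_Icc_succ_top (by omega : 1 ≤ N + 1), Finset.sum_Icc_succ_top (by omega : 1 ≤ N + 1)]
    have step : ∀ k ∈ Finset.Icc 1 N, Wf (N+1) k * (k:ℝ≥0)⁻¹
        = Wf N k * (k:ℝ≥0)⁻¹ + (k:ℝ≥0) * Wf (N+1) k * (((N+1:ℕ):ℝ≥0)^2)⁻¹ := by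
      intro k hk
      simp only [Finset.mem_Icc] at hk
      rw [Wf_keyA hk.1 hk.2]; ring
    rw [Finset.sum_congr rfl step, Finset.sum_add_distrib, ih, ← Finset.sum_mul]
    have hA := lemA' (show 1 ≤ N + 1 by omega)
    rw [Finset.sum_Icc_succ_top (by omega : 1 ≤ N + 1)] at hA
    set S := ∑ k ∈ Finset.Icc 1 N, (k:ℝ≥0) * Wf (N+1) k with hS
    set w := Wf (N+1) (N+1) with hw
    -- goal : RHS + S * inv + w * inv' = RHS + inv'
    apply NNReal.coe_injective
    have hAr : (S:ℝ) + ((N:ℝ)+1) * (w:ℝ) = (N:ℝ)+1 := by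
      have := congrArg (fun x : ℝ≥0 => (x:ℝ)) hA
      push_cast at this
      linarith [this]
    push_cast
    have hN0 : ((N:ℝ)+1) ≠ 0 := by positivity
    field_simp
    linear_combination hAr

lemma lemB {k : ℕ} (hk : 1 ≤ k) :
    ∀ M, k ≤ M → ∑ c ∈ Finset.Icc k M, Wf c k * ((c:ℝ≥0)^2)⁻¹ = Wf M k * ((k:ℝ≥0)^2)⁻¹ := by
  intro M
  refine Nat.le_induction ?_ ?_ M
  · simp
  · intro M hkM ih
    rw [Finset.sum_Icc_succ_top (by omega : k ≤ M + 1), ih]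
    exact Wf_key hk hkM

noncomputable def Gf : ℕ → ℕ → ℝ≥0
  | 0, a => ∑ k ∈ Finset.Icc 1 a, (k:ℝ≥0)⁻¹
  | (j+1), a => ∑ c ∈ Finset.Icc 1 a, ((c:ℝ≥0)^2)⁻¹ * Gf j c

lemma sum_Icc_swap (f : ℕ → ℕ → ℝ≥0) (a : ℕ) :
    ∑ c ∈ Finset.Icc 1 a, ∑ k ∈ Finset.Icc 1 c, f c k
      = ∑ k ∈ Finset.Icc 1 a, ∑ c ∈ Finset.Icc k a, f c k := by
  have h1 : ∀ c ∈ Finset.Icc 1 a, ∑ k ∈ Finset.Icc 1 c, f c k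
      = ∑ k ∈ Finset.Icc 1 a, if k ≤ c then f c k else 0 := by
    intro c hc
    simp only [Finset.mem_Icc] at hc
    rw [Finset.sum_ite, Finset.sum_const_zero, add_zero]
    apply Finset.sum_congr _ (fun _ _ => rfl)
    ext x; simp only [Finset.mem_filter, Finset.mem_Icc]; omega
  have h2 : ∀ k ∈ Finset.Icc 1 a, ∑ c ∈ Finset.Icc k a, f c k
      = ∑ c ∈ Finset.Icc 1 a, if k ≤ c then f c k else 0 := by
    intro k hk
    simp only [Finset.mem_Icc] at hk
    rw [Finset.sum_ite, Finset.sum_const_zero, add_zero]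
    apply Finset.sum_congr _ (fun _ _ => rfl)
    ext x; simp only [Finset.mem_filter, Finset.mem_Icc]; omega
  rw [Finset.sum_congr rfl h1, Finset.sum_congr rfl h2, Finset.sum_comm]

lemma GfP : ∀ (j : ℕ) (a : ℕ), Gf j a = ∑ k ∈ Finset.Icc 1 a, Wf a k * ((k:ℝ≥0)^(2*j+1))⁻¹ := by
  intro j
  induction j with
  | zero =>
    intro a
    simp only [Gf, pow_one, Nat.mul_zero, Nat.zero_add]
    exact (lemA a).symm
  | succ j ih =>
    intro a
    show (∑ c ∈ Finset.Icc 1 a, ((c:ℝ≥0)^2)⁻¹ * Gf j c) = _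
    have e1 : ∀ c ∈ Finset.Icc 1 a, ((c:ℝ≥0)^2)⁻¹ * Gf j c
        = ∑ k ∈ Finset.Icc 1 c, ((k:ℝ≥0)^(2*j+1))⁻¹ * (Wf c k * ((c:ℝ≥0)^2)⁻¹) := by
      intro c hc
      rw [ih c, Finset.mul_sum]
      exact Finset.sum_congr rfl (fun k _ => by ring)
    rw [Finset.sum_congr rfl e1, sum_Icc_swap (fun c k => ((k:ℝ≥0)^(2*j+1))⁻¹ * (Wf c k * ((c:ℝ≥0)^2)⁻¹)) a]
    refine Finset.sum_congr rfl (fun k hk => ?_)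
    simp only [Finset.mem_Icc] at hk
    rw [← Finset.mul_sum, lemB hk.1 a hk.2]
    have hsplit : ((k:ℝ≥0) ^ (2*(j+1)+1))⁻¹ = (k:ℝ≥0)⁻¹ * ((k:ℝ≥0)^(2*j))⁻¹ * (((k:ℝ≥0))^2)⁻¹ := by
      rw [show 2*(j+1)+1 = 1 + 2*j + 2 by ring, pow_add, pow_add, pow_one, mul_inv, mul_inv]
    rw [hsplit, show 2*j+1 = 1 + 2*j by ring, pow_add, pow_one, mul_inv]
    ring

lemma fact_sq_le {N k : ℕ} (h : k ≤ N) : (N !)^2 ≤ (N - k)! * (N + k)! := by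
  have h1 := Nat.add_choose_mul_factorial_mul_factorial (N - k) (N + k)
  have h2 := Nat.add_choose_mul_factorial_mul_factorial N N
  have hadd : N - k + (N + k) = N + N := by omega
  rw [hadd] at h1
  have h3 : (N + N).choose (N + k) ≤ (N + N).choose N := by
    have := Nat.choose_le_middle (N + k) (N + N)
    rwa [show (N + N)/2 = N by omega] at this
  have hpos : 0 < (N + N).choose N := Nat.choose_pos (by omega)
  have key : (N + N).choose N * ((N !)^2) ≤ (N + N).choose N * ((N - k)! * (N + k)!) := by
    calc (N + N).choose N * ((N !)^2) = (N + N).choose N * N ! * N ! := by ring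
    _ = (N + N)! := h2
    _ = (N + N).choose (N + k) * (N - k)! * (N + k)! := h1.symm
    _ ≤ (N + N).choose N * (N - k)! * (N + k)! := by
        exact Nat.mul_le_mul_right _ (Nat.mul_le_mul_right _ h3)
    _ = (N + N).choose N * ((N - k)! * (N + k)!) := by ring
  exact Nat.le_of_mul_le_mul_left key hpos

lemma Wf_le_two {N k : ℕ} (h : k ≤ N) : Wf N k ≤ 2 := by
  rw [Wf, div_le_iff₀ (by positivity)]
  have := fact_sq_le h
  have hc : ((N !:ℝ≥0))^2 ≤ ((N-k)! : ℝ≥0) * ((N+k)! : ℝ≥0) := by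
    have : (((N !)^2 : ℕ) : ℝ≥0) ≤ (((N - k)! * (N + k)! : ℕ) : ℝ≥0) := Nat.cast_le.mpr this
    push_cast at this
    exact this
  refine le_trans (mul_le_mul_right hc 2) (le_of_eq (by ring))

lemma Wf_ratio {N k : ℕ} (h : k ≤ N) :
    (Wf N k : ℝ) = 2 * (N.descFactorial k : ℝ) / ((N+k).descFactorial k : ℝ) := by
  have h1 : (N - k)! * N.descFactorial k = N ! := Nat.factorial_mul_descFactorial h
  have h2 : N ! * (N+k).descFactorial k = (N+k)! := by
    have := Nat.factorial_mul_descFactorial (show k ≤ N + k by omega)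
    rwa [show N + k - k = N by omega] at this
  rw [Wf_coe, ← h2, ← h1]
  have a1 : ((N-k)! : ℝ) ≠ 0 := by positivity
  have a2' : 0 < N.descFactorial k :=
    Nat.pos_of_ne_zero (fun h0 => by have := Nat.descFactorial_eq_zero_iff_lt.mp h0; omega)
  have a3' : 0 < (N+k).descFactorial k :=
    Nat.pos_of_ne_zero (fun h0 => by have := Nat.descFactorial_eq_zero_iff_lt.mp h0; omega)
  have a2 : (N.descFactorial k : ℝ) ≠ 0 := by positivity
  have a3 : ((N+k).descFactorial k : ℝ) ≠ 0 := by positivity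
  push_cast
  field_simp

lemma Wf_lower {N k : ℕ} (hk : 1 ≤ k) (h : k ≤ N) :
    2 * (1 - (k:ℝ) * (2*k-1) / ((N:ℝ)+k)) ≤ (Wf N k : ℝ) := by
  have hNk0 : (0:ℝ) < (N:ℝ) + k := by positivity
  have hdNpos : 0 < N.descFactorial k :=
    Nat.pos_of_ne_zero (fun h0 => by have := Nat.descFactorial_eq_zero_iff_lt.mp h0; omega)
  have hdNKpos : 0 < (N+k).descFactorial k :=
    Nat.pos_of_ne_zero (fun h0 => by have := Nat.descFactorial_eq_zero_iff_lt.mp h0; omega)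
  have hb : (-2:ℝ) ≤ -((2*(k:ℝ)-1) / ((N:ℝ)+k)) := by
    rw [neg_le_neg_iff]
    rw [div_le_iff₀ hNk0]
    have c1 : (1:ℝ) ≤ (k:ℝ) := by exact_mod_cast hk
    have c2 : (k:ℝ) ≤ (N:ℝ) := by exact_mod_cast h
    nlinarith [c1, c2]
  have hbern := one_add_mul_le_pow hb k
  have hform : (1:ℝ) + (-((2*(k:ℝ)-1) / ((N:ℝ)+k))) = ((N+1-k:ℕ):ℝ) / ((N:ℝ)+k) := by
    rw [Nat.cast_sub (by omega)]
    push_cast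
    field_simp
    ring
  -- step 1 : 2 * (1 - k(2k-1)/(N+k)) ≤ 2 * ((N+1-k)/(N+k))^k
  have s1 : 2 * (1 - (k:ℝ) * (2*k-1) / ((N:ℝ)+k)) ≤ 2 * (((N+1-k:ℕ):ℝ) / ((N:ℝ)+k))^k := by
    rw [← hform]
    have : 1 - (k:ℝ) * (2*k-1) / ((N:ℝ)+k) = 1 + (k:ℕ) * (-((2*(k:ℝ)-1) / ((N:ℝ)+k))) := by
      push_cast; ring
    rw [this]
    linarith [hbern]
  refine s1.trans ?_
  rw [Wf_ratio h, div_pow]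
  have hnum : (((N+1-k:ℕ):ℝ))^k ≤ (N.descFactorial k : ℝ) := by
    have := Nat.pow_sub_le_descFactorial N k
    calc (((N+1-k:ℕ):ℝ))^k = (((N+1-k)^k : ℕ) : ℝ) := by push_cast; ring
      _ ≤ _ := Nat.cast_le.mpr this
  have hden : ((N+k).descFactorial k : ℝ) ≤ (((N:ℝ)+k))^k := by
    have := Nat.descFactorial_le_pow (N+k) k
    calc ((N+k).descFactorial k : ℝ) ≤ (((N+k)^k : ℕ) : ℝ) := Nat.cast_le.mpr this
      _ = _ := by push_cast; ring
  have hdiv : (((N+1-k:ℕ):ℝ))^k / (((N:ℝ)+k))^k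
      ≤ (N.descFactorial k : ℝ) / ((N+k).descFactorial k : ℝ) := by
    apply div_le_div₀ (by positivity) hnum (by exact_mod_cast hdNKpos) hden
  calc 2 * ((((N+1-k:ℕ):ℝ))^k / (((N:ℝ)+k))^k)
      ≤ 2 * ((N.descFactorial k : ℝ) / ((N+k).descFactorial k : ℝ)) := by linarith [hdiv]
    _ = 2 * (N.descFactorial k : ℝ) / ((N+k).descFactorial k : ℝ) := by ring

open Filter Topology in
lemma tendsto_Wf {k : ℕ} (hk : 1 ≤ k) :
    Tendsto (fun N => ((Wf N k : ℝ≥0) : ℝ≥0∞)) atTop (𝓝 2) := by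
  have hreal : Tendsto (fun N : ℕ => ((Wf N k : ℝ≥0) : ℝ)) atTop (𝓝 2) := by
    have hden : Tendsto (fun N : ℕ => ((N:ℝ) + k)) atTop atTop :=
      tendsto_atTop_add_const_right _ _ tendsto_natCast_atTop_atTop
    have h0 : Tendsto (fun N : ℕ => (k:ℝ) * (2*k-1) / ((N:ℝ)+k)) atTop (𝓝 0) :=
      Tendsto.div_atTop tendsto_const_nhds hden
    have hlow : Tendsto (fun N : ℕ => 2 * (1 - (k:ℝ) * (2*k-1) / ((N:ℝ)+k))) atTop (𝓝 2) := by
      have := (tendsto_const_nhds (x := (1:ℝ)) (f := atTop (α := ℕ))).sub h0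
      have h2 := this.const_mul (2:ℝ)
      simpa using h2
    refine tendsto_of_tendsto_of_tendsto_of_le_of_le' hlow tendsto_const_nhds ?_ ?_
    · filter_upwards [eventually_ge_atTop k] with N hN
      exact Wf_lower hk hN
    · filter_upwards [eventually_ge_atTop k] with N hN
      have h2 := Wf_le_two hN
      exact_mod_cast h2
  rw [show (2:ℝ≥0∞) = ((2:ℝ≥0):ℝ≥0∞) by norm_cast]
  rw [ENNReal.tendsto_coe]
  rw [← NNReal.tendsto_coe]
  convert hreal using 2
  simp

open Filter Topology in
lemma inner_c {k : ℕ} (hk : 1 ≤ k) :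
    ∑' c : ℕ, (if k ≤ c then ((c:ℝ≥0∞)^2)⁻¹ * ((Wf c k : ℝ≥0) : ℝ≥0∞) else 0)
      = 2 * ((k:ℝ≥0∞)^2)⁻¹ := by
  set f : ℕ → ℝ≥0∞ := fun c => (if k ≤ c then ((c:ℝ≥0∞)^2)⁻¹ * ((Wf c k : ℝ≥0) : ℝ≥0∞) else 0) with hf
  have h1 : Tendsto (fun N => ∑ c ∈ Finset.range N, f c) atTop (𝓝 (∑' c, f c)) :=
    ENNReal.tendsto_nat_tsum f
  have h2 : ∀ N, k + 1 ≤ N →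
      ∑ c ∈ Finset.range N, f c = ((Wf (N-1) k : ℝ≥0) : ℝ≥0∞) * ((k:ℝ≥0∞)^2)⁻¹ := by
    intro N hN
    have e0 : ∑ c ∈ Finset.range N, f c = ∑ c ∈ (Finset.range N).filter (fun c => k ≤ c),
        ((c:ℝ≥0∞)^2)⁻¹ * ((Wf c k : ℝ≥0) : ℝ≥0∞) := by
      rw [Finset.sum_filter]
    have e1 : (Finset.range N).filter (fun c => k ≤ c) = Finset.Icc k (N-1) := by
      ext x; simp only [Finset.mem_filter, Finset.mem_range, Finset.mem_Icc]; omega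
    have e2 : ∀ c ∈ Finset.Icc k (N-1), ((c:ℝ≥0∞)^2)⁻¹ * ((Wf c k : ℝ≥0) : ℝ≥0∞)
        = ((Wf c k * ((c:ℝ≥0)^2)⁻¹ : ℝ≥0) : ℝ≥0∞) := by
      intro c hc
      simp only [Finset.mem_Icc] at hc
      have hc0 : ((c:ℝ≥0)) ≠ 0 := by
        have : 1 ≤ c := le_trans hk hc.1
        positivity
      rw [ENNReal.coe_mul, ENNReal.coe_inv (by positivity), ENNReal.coe_pow]
      push_cast
      ring
    rw [e0, e1, Finset.sum_congr rfl e2, ← ENNReal.coe_finset_sum,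
      lemB hk (N-1) (by omega), ENNReal.coe_mul,
      ENNReal.coe_inv (by positivity), ENNReal.coe_pow]
    norm_cast
  have h3 : Tendsto (fun N => ((Wf (N-1) k : ℝ≥0) : ℝ≥0∞) * ((k:ℝ≥0∞)^2)⁻¹) atTop
      (𝓝 (2 * ((k:ℝ≥0∞)^2)⁻¹)) := by
    apply ENNReal.Tendsto.mul_const
    · exact (tendsto_Wf hk).comp (tendsto_sub_atTop_nat 1)
    · left; norm_num
  have h1' : Tendsto (fun N => ∑ c ∈ Finset.range N, f c) atTop (𝓝 (2 * ((k:ℝ≥0∞)^2)⁻¹)) := by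
    refine h3.congr' ?_
    filter_upwards [eventually_ge_atTop (k+1)] with N hN
    exact (h2 N hN).symm
  exact tendsto_nhds_unique h1 h1'

lemma cons_pos {n : ℕ} (c : ℕ) (g : Fin (n+1) → ℕ) :
    (∀ i, 1 ≤ (Fin.cons c g : Fin (n+2) → ℕ) i) ↔ (1 ≤ c ∧ ∀ i, 1 ≤ g i) := by
  rw [Fin.forall_fin_succ]
  simp [Fin.cons_zero, Fin.cons_succ]

lemma cons_dec {n : ℕ} (c : ℕ) (g : Fin (n+1) → ℕ) :
    (∀ i j : Fin (n+2), i ≤ j → (Fin.cons c g : Fin (n+2) → ℕ) j ≤ (Fin.cons c g : Fin (n+2) → ℕ) i)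
      ↔ ((∀ i j : Fin (n+1), i ≤ j → g j ≤ g i) ∧ g 0 ≤ c) := by
  constructor
  · intro h
    refine ⟨fun i j hij => ?_, ?_⟩
    · have := h i.succ j.succ (by rwa [Fin.succ_le_succ_iff])
      simpa [Fin.cons_succ] using this
    · have := h 0 (Fin.succ 0) (Fin.zero_le _)
      simpa [Fin.cons_succ, Fin.cons_zero] using this
  · rintro ⟨hg, h0⟩ i j hij
    induction i using Fin.cases with
    | zero =>
      induction j using Fin.cases with
      | zero => exact le_refl _
      | succ j' =>
        simp only [Fin.cons_succ, Fin.cons_zero]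
        exact le_trans (hg 0 j' (Fin.zero_le _)) h0
    | succ i' =>
      induction j using Fin.cases with
      | zero =>
        exfalso
        have : i'.succ = 0 := le_antisymm hij (Fin.zero_le _)
        exact Fin.succ_ne_zero i' this
      | succ j' =>
        simp only [Fin.cons_succ]
        exact hg i' j' (by rwa [← Fin.succ_le_succ_iff])

lemma innerSumLem : ∀ (j : ℕ) (a : ℕ),
    (∑' g : Fin (j+1) → ℕ,
      (if (∀ i, 1 ≤ g i) ∧ (∀ i i', i ≤ i' → g i' ≤ g i) ∧ g 0 ≤ a
       then ∏ i, ((g i : ℝ≥0∞) ^ (if (i:ℕ) < j then 2 else 1))⁻¹ else 0))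
      = ((Gf j a : ℝ≥0) : ℝ≥0∞) := by
  intro j
  induction j with
  | zero =>
    intro a
    rw [← Equiv.tsum_eq (Equiv.funUnique (Fin 1) ℕ).symm]
    have hterm : ∀ n : ℕ, (fun g : Fin 1 → ℕ =>
        (if (∀ i, 1 ≤ g i) ∧ (∀ i i', i ≤ i' → g i' ≤ g i) ∧ g 0 ≤ a
         then ∏ i, ((g i : ℝ≥0∞) ^ (if (i:ℕ) < 0 then 2 else 1))⁻¹ else 0))
          ((Equiv.funUnique (Fin 1) ℕ).symm n)
        = if 1 ≤ n ∧ n ≤ a then ((n:ℝ≥0∞))⁻¹ else 0 := by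
      intro n
      simp [Equiv.funUnique, Fin.forall_fin_one, Fin.prod_univ_one]
    rw [tsum_congr hterm]
    rw [tsum_eq_sum (s := Finset.Icc 1 a) (fun b hb => by
      rw [if_neg]; simp only [Finset.mem_Icc] at hb; omega)]
    have : ∀ b ∈ Finset.Icc 1 a, (if 1 ≤ b ∧ b ≤ a then ((b:ℝ≥0∞))⁻¹ else 0)
        = (((b:ℝ≥0)⁻¹ : ℝ≥0) : ℝ≥0∞) := by
      intro b hb
      simp only [Finset.mem_Icc] at hb
      rw [if_pos ⟨hb.1, hb.2⟩, ENNReal.coe_inv (by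
        have : 1 ≤ b := hb.1; positivity), ENNReal.coe_natCast]
    rw [Finset.sum_congr rfl this, ← ENNReal.coe_finset_sum]
    rfl
  | succ jj ih =>
    intro a
    rw [← Equiv.tsum_eq (Fin.consEquiv (fun _ : Fin (jj+1+1) => ℕ))]
    rw [ENNReal.tsum_prod']
    have hterm : ∀ (c : ℕ) (g : Fin (jj+1) → ℕ),
        (fun f : Fin (jj+2) → ℕ =>
          (if (∀ i, 1 ≤ f i) ∧ (∀ i i', i ≤ i' → f i' ≤ f i) ∧ f 0 ≤ a
           then ∏ i, ((f i : ℝ≥0∞) ^ (if (i:ℕ) < jj+1 then 2 else 1))⁻¹ else 0))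
          (Fin.consEquiv (fun _ : Fin (jj+1+1) => ℕ) (c, g))
        = if (1 ≤ c ∧ c ≤ a) then
            (((c:ℝ≥0∞))^2)⁻¹ *
            (if (∀ i, 1 ≤ g i) ∧ (∀ i i', i ≤ i' → g i' ≤ g i) ∧ g 0 ≤ c
             then ∏ i, ((g i : ℝ≥0∞) ^ (if (i:ℕ) < jj then 2 else 1))⁻¹ else 0)
          else 0 := by
      intro c g
      have hcons : (Fin.consEquiv (fun _ : Fin (jj+1+1) => ℕ)) (c, g)
          = (Fin.cons c g : Fin (jj+2) → ℕ) := rfl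
      rw [hcons]
      have hcond : ((∀ i, 1 ≤ (Fin.cons c g : Fin (jj+2) → ℕ) i)
            ∧ (∀ i i', i ≤ i' → (Fin.cons c g : Fin (jj+2) → ℕ) i' ≤ (Fin.cons c g : Fin (jj+2) → ℕ) i)
            ∧ (Fin.cons c g : Fin (jj+2) → ℕ) 0 ≤ a)
          ↔ ((1 ≤ c ∧ c ≤ a) ∧ ((∀ i, 1 ≤ g i) ∧ (∀ i i', i ≤ i' → g i' ≤ g i) ∧ g 0 ≤ c)) := by
        rw [cons_pos, cons_dec, Fin.cons_zero]
        tauto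
      have hprod : ∏ i, (((Fin.cons c g : Fin (jj+2) → ℕ) i : ℝ≥0∞) ^ (if (i:ℕ) < jj+1 then 2 else 1))⁻¹
          = (((c:ℝ≥0∞))^2)⁻¹ * ∏ i, ((g i : ℝ≥0∞) ^ (if (i:ℕ) < jj then 2 else 1))⁻¹ := by
        rw [Fin.prod_univ_succ]
        congr 1
        · simp [Fin.cons_zero]
      beta_reduce
      rw [if_congr hcond hprod rfl]
      by_cases h1 : 1 ≤ c ∧ c ≤ a
      · by_cases h2 : (∀ i, 1 ≤ g i) ∧ (∀ i i', i ≤ i' → g i' ≤ g i) ∧ g 0 ≤ c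
        · rw [if_pos (⟨h1, h2⟩ : _ ∧ _), if_pos h1, if_pos h2]
        · rw [if_neg (by tauto), if_pos h1, if_neg h2, mul_zero]
      · rw [if_neg (by tauto), if_neg h1]
    rw [tsum_congr (fun c => tsum_congr (fun g => hterm c g))]
    have hstep : ∀ c : ℕ,
        (∑' g : Fin (jj+1) → ℕ,
          (if (1 ≤ c ∧ c ≤ a) then
            (((c:ℝ≥0∞))^2)⁻¹ *
            (if (∀ i, 1 ≤ g i) ∧ (∀ i i', i ≤ i' → g i' ≤ g i) ∧ g 0 ≤ c
             then ∏ i, ((g i : ℝ≥0∞) ^ (if (i:ℕ) < jj then 2 else 1))⁻¹ else 0)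
          else 0))
        = if (1 ≤ c ∧ c ≤ a) then (((c:ℝ≥0∞))^2)⁻¹ * ((Gf jj c : ℝ≥0) : ℝ≥0∞) else 0 := by
      intro c
      by_cases h1 : 1 ≤ c ∧ c ≤ a
      · simp only [if_pos h1]
        rw [ENNReal.tsum_mul_left, ih c]
      · simp only [if_neg h1, tsum_zero]
    rw [tsum_congr hstep]
    rw [tsum_eq_sum (s := Finset.Icc 1 a) (fun b hb => by
      rw [if_neg]; simp only [Finset.mem_Icc] at hb; omega)]
    have hlast : ∀ b ∈ Finset.Icc 1 a,
        (if (1 ≤ b ∧ b ≤ a) then (((b:ℝ≥0∞))^2)⁻¹ * ((Gf jj b : ℝ≥0) : ℝ≥0∞) else 0)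
        = ((((b:ℝ≥0)^2)⁻¹ * Gf jj b : ℝ≥0) : ℝ≥0∞) := by
      intro b hb
      simp only [Finset.mem_Icc] at hb
      rw [if_pos ⟨hb.1, hb.2⟩, ENNReal.coe_mul, ENNReal.coe_inv (by
        have : 1 ≤ b := hb.1; positivity), ENNReal.coe_pow, ENNReal.coe_natCast]
    rw [Finset.sum_congr rfl hlast, ← ENNReal.coe_finset_sum]
    rfl

lemma pow_inv_split {k : ℕ} (hk : k ≠ 0) (a b : ℕ) :
    ((k:ℝ≥0∞)^(a+b))⁻¹ = ((k:ℝ≥0∞)^a)⁻¹ * ((k:ℝ≥0∞)^b)⁻¹ := by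
  have h0 : (k:ℝ≥0∞) ≠ 0 := by exact_mod_cast hk
  rw [pow_add, ENNReal.mul_inv (Or.inl (pow_ne_zero _ h0))
    (Or.inl (ENNReal.pow_ne_top (ENNReal.natCast_ne_top k)))]

lemma partC (mm : ℕ) :
    ∑' c : ℕ, (if 1 ≤ c then ((c:ℝ≥0∞)^2)⁻¹ * ((Gf mm c : ℝ≥0) : ℝ≥0∞) else 0)
      = 2 * ∑' k : ℕ+, ((k:ℝ≥0∞)^(2*(mm+1)+1))⁻¹ := by
  have step1 : ∀ c : ℕ, (if 1 ≤ c then ((c:ℝ≥0∞)^2)⁻¹ * ((Gf mm c : ℝ≥0) : ℝ≥0∞) else 0)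
      = ∑' k : ℕ, (if 1 ≤ k ∧ k ≤ c then
          ((k:ℝ≥0∞)^(2*mm+1))⁻¹ * (((c:ℝ≥0∞)^2)⁻¹ * ((Wf c k : ℝ≥0) : ℝ≥0∞)) else 0) := by
    intro c
    by_cases hc : 1 ≤ c
    · rw [if_pos hc]
      rw [tsum_eq_sum (s := Finset.Icc 1 c) (fun b hb => by
        rw [if_neg]; simp only [Finset.mem_Icc] at hb; omega)]
      rw [GfP mm c, ENNReal.coe_finset_sum, Finset.mul_sum]
      refine Finset.sum_congr rfl (fun k hk => ?_)
      simp only [Finset.mem_Icc] at hk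
      rw [if_pos ⟨hk.1, hk.2⟩]
      have hk0 : ((k:ℝ≥0)) ≠ 0 := by have : 1 ≤ k := hk.1; positivity
      rw [ENNReal.coe_mul, ENNReal.coe_inv (by positivity), ENNReal.coe_pow, ENNReal.coe_natCast]
      ring
    · rw [if_neg hc]
      symm
      convert tsum_zero with k
      rw [if_neg (by omega)]
  rw [tsum_congr step1, ENNReal.tsum_comm]
  have step2 : ∀ k : ℕ, (∑' c : ℕ, (if 1 ≤ k ∧ k ≤ c then
        ((k:ℝ≥0∞)^(2*mm+1))⁻¹ * (((c:ℝ≥0∞)^2)⁻¹ * ((Wf c k : ℝ≥0) : ℝ≥0∞)) else 0))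
      = if 1 ≤ k then 2 * ((k:ℝ≥0∞)^(2*(mm+1)+1))⁻¹ else 0 := by
    intro k
    by_cases hk : 1 ≤ k
    · rw [if_pos hk]
      have e1 : ∀ c : ℕ, (if 1 ≤ k ∧ k ≤ c then
            ((k:ℝ≥0∞)^(2*mm+1))⁻¹ * (((c:ℝ≥0∞)^2)⁻¹ * ((Wf c k : ℝ≥0) : ℝ≥0∞)) else 0)
          = ((k:ℝ≥0∞)^(2*mm+1))⁻¹ * (if k ≤ c then ((c:ℝ≥0∞)^2)⁻¹ * ((Wf c k : ℝ≥0) : ℝ≥0∞) else 0) := by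
        intro c
        by_cases hkc : k ≤ c
        · rw [if_pos ⟨hk, hkc⟩, if_pos hkc]
        · rw [if_neg (by tauto), if_neg hkc, mul_zero]
      rw [tsum_congr e1, ENNReal.tsum_mul_left, inner_c hk]
      rw [show 2*(mm+1)+1 = (2*mm+1) + 2 by ring, pow_inv_split (by omega) (2*mm+1) 2]
      rw [← mul_assoc, mul_comm (((k:ℝ≥0∞))^(2*mm+1))⁻¹ 2, mul_assoc]
    · rw [if_neg hk]
      convert tsum_zero with c
      rw [if_neg (by omega)]
  rw [tsum_congr step2]
  have step3 : ∀ k : ℕ, (if 1 ≤ k then 2 * ((k:ℝ≥0∞)^(2*(mm+1)+1))⁻¹ else 0)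
      = 2 * (if 1 ≤ k then ((k:ℝ≥0∞)^(2*(mm+1)+1))⁻¹ else 0) := by
    intro k
    by_cases hk : 1 ≤ k
    · rw [if_pos hk, if_pos hk]
    · rw [if_neg hk, if_neg hk, mul_zero]
  rw [tsum_congr step3, ENNReal.tsum_mul_left]
  congr 1
  have hind : (∑' k : ℕ, (if 1 ≤ k then ((k:ℝ≥0∞)^(2*(mm+1)+1))⁻¹ else 0))
      = ∑' k : ℕ, ({k : ℕ | 0 < k}).indicator (fun k : ℕ => ((k:ℝ≥0∞)^(2*(mm+1)+1))⁻¹) k := by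
    refine tsum_congr (fun k => ?_)
    rw [Set.indicator_apply]
    split_ifs with h1 h2 <;>
      first
      | rfl
      | (exfalso; simp only [Set.mem_setOf_eq] at *; omega)
  rw [hind]
  rw [← tsum_subtype (f := fun k : ℕ => ((k:ℝ≥0∞)^(2*(mm+1)+1))⁻¹) {k : ℕ | 0 < k}]
  exact (Equiv.tsum_eq (⟨fun x => ⟨x.1, x.2⟩, fun k => ⟨k.1, k.2⟩, fun _ => rfl, fun _ => rfl⟩ :
      ↑({k : ℕ | 0 < k}) ≃ ℕ+) (fun k : ℕ+ => ((k:ℝ≥0∞)^(2*(mm+1)+1))⁻¹)).symm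

lemma tsum_subtype' {α : Type*} (p : α → Prop) [DecidablePred p] (F : α → ℝ≥0∞) :
    ∑' x : {a : α // p a}, F x.1 = ∑' a : α, (if p a then F a else 0) := by
  refine (tsum_subtype {a : α | p a} F).trans (tsum_congr fun a => ?_)
  by_cases h : p a
  · rw [Set.indicator_of_mem (show a ∈ {a | p a} from h) F, if_pos h]
  · rw [Set.indicator_of_notMem (show a ∉ {a | p a} from h) F, if_neg h]

lemma master (m : ℕ) (hm : 1 ≤ m) (l : ℕ) (hl : l = m + 1) (e : Fin l → ℕ)
    (he : ∀ i : Fin l, e i = if (i:ℕ) < m then 2 else 1) :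
    ∑' f : {f : Fin l → ℕ // (∀ i, 1 ≤ f i) ∧ ∀ i j, i ≤ j → f j ≤ f i},
      ∏ i, ((f.1 i : ℝ≥0∞) ^ e i)⁻¹
      = 2 * ∑' k : ℕ+, ((k:ℝ≥0∞)^(2*m+1))⁻¹ := by
  subst hl
  obtain ⟨mm, rfl⟩ : ∃ mm, m = mm + 1 := ⟨m-1, by omega⟩
  have h1 : ∑' f : {f : Fin (mm+1+1) → ℕ // (∀ i, 1 ≤ f i) ∧ ∀ i j, i ≤ j → f j ≤ f i},
      ∏ i, ((f.1 i : ℝ≥0∞) ^ e i)⁻¹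
      = ∑' f : {f : Fin (mm+1+1) → ℕ // (∀ i, 1 ≤ f i) ∧ ∀ i j, i ≤ j → f j ≤ f i},
      ∏ i, ((f.1 i : ℝ≥0∞) ^ (if (i:ℕ) < mm+1 then 2 else 1))⁻¹ :=
    tsum_congr (fun f => Finset.prod_congr rfl (fun i _ => by rw [he i]))
  rw [h1, tsum_subtype' (fun f : Fin (mm+1+1) → ℕ => (∀ i, 1 ≤ f i) ∧ ∀ i j, i ≤ j → f j ≤ f i)
    (fun f => ∏ i, ((f i : ℝ≥0∞) ^ (if (i:ℕ) < mm+1 then 2 else 1))⁻¹)]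
  rw [← Equiv.tsum_eq (Fin.consEquiv (fun _ : Fin (mm+1+1) => ℕ)), ENNReal.tsum_prod']
  have hterm : ∀ (c : ℕ) (g : Fin (mm+1) → ℕ),
      (fun f : Fin (mm+2) → ℕ =>
        (if (∀ i, 1 ≤ f i) ∧ (∀ i i', i ≤ i' → f i' ≤ f i)
         then ∏ i, ((f i : ℝ≥0∞) ^ (if (i:ℕ) < mm+1 then 2 else 1))⁻¹ else 0))
        (Fin.consEquiv (fun _ : Fin (mm+1+1) => ℕ) (c, g))
      = if 1 ≤ c then
          (((c:ℝ≥0∞))^2)⁻¹ *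
          (if (∀ i, 1 ≤ g i) ∧ (∀ i i', i ≤ i' → g i' ≤ g i) ∧ g 0 ≤ c
           then ∏ i, ((g i : ℝ≥0∞) ^ (if (i:ℕ) < mm then 2 else 1))⁻¹ else 0)
        else 0 := by
    intro c g
    have hcons : (Fin.consEquiv (fun _ : Fin (mm+1+1) => ℕ)) (c, g)
        = (Fin.cons c g : Fin (mm+2) → ℕ) := rfl
    rw [hcons]
    have hcond : ((∀ i, 1 ≤ (Fin.cons c g : Fin (mm+2) → ℕ) i)
          ∧ (∀ i i', i ≤ i' → (Fin.cons c g : Fin (mm+2) → ℕ) i' ≤ (Fin.cons c g : Fin (mm+2) → ℕ) i))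
        ↔ ((1 ≤ c) ∧ ((∀ i, 1 ≤ g i) ∧ (∀ i i', i ≤ i' → g i' ≤ g i) ∧ g 0 ≤ c)) := by
      rw [cons_pos, cons_dec]
      tauto
    have hprod : ∏ i, (((Fin.cons c g : Fin (mm+2) → ℕ) i : ℝ≥0∞) ^ (if (i:ℕ) < mm+1 then 2 else 1))⁻¹
        = (((c:ℝ≥0∞))^2)⁻¹ * ∏ i, ((g i : ℝ≥0∞) ^ (if (i:ℕ) < mm then 2 else 1))⁻¹ := by
      rw [Fin.prod_univ_succ]
      congr 1
      · simp [Fin.cons_zero]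
    beta_reduce
    rw [if_congr hcond hprod rfl]
    by_cases h1 : 1 ≤ c
    · by_cases h2 : (∀ i, 1 ≤ g i) ∧ (∀ i i', i ≤ i' → g i' ≤ g i) ∧ g 0 ≤ c
      · rw [if_pos (⟨h1, h2⟩ : _ ∧ _), if_pos h1, if_pos h2]
      · rw [if_neg (by tauto), if_pos h1, if_neg h2, mul_zero]
    · rw [if_neg (by tauto), if_neg h1]
  rw [tsum_congr (fun c => tsum_congr (fun g => hterm c g))]
  have hstep : ∀ c : ℕ,
      (∑' g : Fin (mm+1) → ℕ,
        (if 1 ≤ c then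
          (((c:ℝ≥0∞))^2)⁻¹ *
          (if (∀ i, 1 ≤ g i) ∧ (∀ i i', i ≤ i' → g i' ≤ g i) ∧ g 0 ≤ c
           then ∏ i, ((g i : ℝ≥0∞) ^ (if (i:ℕ) < mm then 2 else 1))⁻¹ else 0)
        else 0))
      = if 1 ≤ c then (((c:ℝ≥0∞))^2)⁻¹ * ((Gf mm c : ℝ≥0) : ℝ≥0∞) else 0 := by
    intro c
    by_cases h1 : 1 ≤ c
    · simp only [if_pos h1]
      rw [ENNReal.tsum_mul_left, innerSumLem mm c]
    · simp only [if_neg h1, tsum_zero]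
  rw [tsum_congr hstep, partC mm]


end ZetaStarAux

/-- Multiple zeta-star value: sum over weakly decreasing tuples of positive integers. -/
noncomputable def zetaStar (ks : List ℕ) : ℝ :=
  ∑' f : {f : Fin ks.length → ℕ // (∀ i, 1 ≤ f i) ∧ ∀ i j, i ≤ j → f j ≤ f i},
    ∏ i, ((f.1 i : ℝ) ^ ks.get i)⁻¹
noncomputable def rzeta (k : ℕ) : ℝ := ∑' n : ℕ+, ((n : ℝ) ^ k)⁻¹

theorem stmt_18 (m : ℕ) (hm : 1 ≤ m) :
    zetaStar (List.replicate m 2 ++ [1]) = 2 * rzeta (2 * m + 1) := by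
  classical
  set ks : List ℕ := List.replicate m 2 ++ [1] with hks
  have hlen : ks.length = m + 1 := by simp [hks]
  have hget0 : ∀ (j : ℕ) (hj : j < (List.replicate m 2 ++ [1]).length),
      (List.replicate m 2 ++ [1])[j] = if j < m then 2 else 1 := by
    intro j hj
    by_cases h : j < m
    · rw [List.getElem_append_left (by simpa using h), if_pos h]
      exact List.getElem_replicate _
    · rw [List.getElem_append_right (by simpa using h), if_neg h]
      simp
  have hget : ∀ i : Fin ks.length, ks.get i = if (i:ℕ) < m then 2 else 1 := by
    intro i
    rw [List.get_eq_getElem]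
    exact hget0 (i:ℕ) (by simpa [hks] using i.2)
  have hENN : ∑' f : {f : Fin ks.length → ℕ // (∀ i, 1 ≤ f i) ∧ ∀ i j, i ≤ j → f j ≤ f i},
      ((∏ i, ((f.1 i : ℝ≥0) ^ (ks.get i))⁻¹ : ℝ≥0) : ℝ≥0∞)
      = 2 * ∑' k : ℕ+, ((k:ℝ≥0∞)^(2*m+1))⁻¹ := by
    have hco : ∀ f : {f : Fin ks.length → ℕ // (∀ i, 1 ≤ f i) ∧ ∀ i j, i ≤ j → f j ≤ f i},
        ((∏ i, ((f.1 i : ℝ≥0) ^ (ks.get i))⁻¹ : ℝ≥0) : ℝ≥0∞)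
        = ∏ i, ((f.1 i : ℝ≥0∞) ^ (ks.get i))⁻¹ := by
      intro f
      rw [ENNReal.coe_finset_prod]
      refine Finset.prod_congr rfl (fun i _ => ?_)
      have h1 : ((f.1 i : ℝ≥0)) ≠ 0 := by
        have := f.2.1 i; positivity
      rw [ENNReal.coe_inv (pow_ne_zero _ h1), ENNReal.coe_pow, ENNReal.coe_natCast]
    rw [tsum_congr hco]
    exact master m hm ks.length hlen (fun i => ks.get i) hget
  have hgsum : Summable (fun n : ℕ => ((n:ℝ)^(2*m+1))⁻¹) := by
    have := (Real.summable_one_div_nat_pow (p := 2*m+1)).mpr (by omega)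
    simpa [one_div] using this
  have hzsumR : Summable (fun k : ℕ+ => (((k:ℕ):ℝ)^(2*m+1))⁻¹) := by
    have hsub := hgsum.subtype {n : ℕ | 0 < n}
    exact (Equiv.summable_iff (⟨fun (k:ℕ+) => (⟨k.1, k.2⟩ : ↑{n : ℕ | 0 < n}),
      fun x => ⟨x.1, x.2⟩, fun _ => rfl, fun _ => rfl⟩ : ℕ+ ≃ ↑{n : ℕ | 0 < n})).mpr hsub
  have hzsum : Summable (fun k : ℕ+ => (((k:ℕ):ℝ≥0)^(2*m+1))⁻¹) := by
    rw [← NNReal.summable_coe]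
    refine hzsumR.congr (fun k => ?_)
    push_cast
    rfl
  have hz1 : ∑' k : ℕ+, ((k:ℝ≥0∞)^(2*m+1))⁻¹
      = ((∑' k : ℕ+, (((k:ℕ):ℝ≥0)^(2*m+1))⁻¹ : ℝ≥0) : ℝ≥0∞) := by
    rw [ENNReal.coe_tsum hzsum]
    refine tsum_congr (fun k => ?_)
    have h1 : (((k:ℕ):ℝ≥0)) ≠ 0 := by
      have := k.2; positivity
    rw [ENNReal.coe_inv (pow_ne_zero _ h1), ENNReal.coe_pow, ENNReal.coe_natCast]
  have hne : ∑' f : {f : Fin ks.length → ℕ // (∀ i, 1 ≤ f i) ∧ ∀ i j, i ≤ j → f j ≤ f i},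
      ((∏ i, ((f.1 i : ℝ≥0) ^ (ks.get i))⁻¹ : ℝ≥0) : ℝ≥0∞) ≠ ⊤ := by
    rw [hENN, hz1]
    exact ENNReal.mul_ne_top (by norm_num) ENNReal.coe_ne_top
  have hFsum : Summable (fun f : {f : Fin ks.length → ℕ // (∀ i, 1 ≤ f i) ∧ ∀ i j, i ≤ j → f j ≤ f i} =>
      (∏ i, ((f.1 i : ℝ≥0) ^ (ks.get i))⁻¹ : ℝ≥0)) :=
    ENNReal.tsum_coe_ne_top_iff_summable.mp hne
  have hFeq : (∑' f : {f : Fin ks.length → ℕ // (∀ i, 1 ≤ f i) ∧ ∀ i j, i ≤ j → f j ≤ f i},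
      (∏ i, ((f.1 i : ℝ≥0) ^ (ks.get i))⁻¹ : ℝ≥0))
      = 2 * ∑' k : ℕ+, (((k:ℕ):ℝ≥0)^(2*m+1))⁻¹ := by
    have hc := ENNReal.coe_tsum hFsum
    rw [hENN, hz1] at hc
    have : ((2 * ∑' k : ℕ+, (((k:ℕ):ℝ≥0)^(2*m+1))⁻¹ : ℝ≥0) : ℝ≥0∞)
        = 2 * ((∑' k : ℕ+, (((k:ℕ):ℝ≥0)^(2*m+1))⁻¹ : ℝ≥0) : ℝ≥0∞) := by
      push_cast
      rfl
    exact ENNReal.coe_injective (hc.trans this.symm)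
  have hzetaStar : zetaStar ks = ((∑' f : {f : Fin ks.length → ℕ // (∀ i, 1 ≤ f i) ∧ ∀ i j, i ≤ j → f j ≤ f i},
      (∏ i, ((f.1 i : ℝ≥0) ^ (ks.get i))⁻¹ : ℝ≥0) : ℝ≥0) : ℝ) := by
    rw [zetaStar, NNReal.coe_tsum]
    refine tsum_congr (fun f => ?_)
    push_cast
    rfl
  have hrz : rzeta (2*m+1) = ((∑' k : ℕ+, (((k:ℕ):ℝ≥0)^(2*m+1))⁻¹ : ℝ≥0) : ℝ) := by
    rw [rzeta, NNReal.coe_tsum]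
    refine tsum_congr (fun k => ?_)
    push_cast
    rfl
  rw [hzetaStar, hFeq, hrz]
  push_cast
  ring
end
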